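/- Let ω = 2π Σⱼₖ Yₖⱼ dxⱼ∧dyₖ + 2π Σⱼₖ (XᵗY)ₖⱼ dyⱼ∧dyₖ and F = -2πi Σⱼₖ (Sᵗ)ₖⱼ dxⱼ∧dyₖ on ℝ²ⁿ, where X, Y, S are real n×n matrices. Then the top wedge power satisfies (ω - F)ⁿ = (2πi)ⁿ n! · det(-iY + Sᵗ) · dx₁∧dy₁∧⋯∧dxₙ∧dyₙ. -/

import Mathlib

set_option maxHeartbeats 1000000
set_option synthInstance.maxHeartbeats 400000

open Matrix

namespace Stmt12Helper

variable {K : Type*} [Field K] {M : Type*} [AddCommGroup M] [Module K M]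

local notation "ιι" => ExteriorAlgebra.ι K

lemma anticomm (v w : M) : ιι v * ιι w = -(ιι w * ιι v) :=
  eq_neg_of_add_eq_zero_left (ExteriorAlgebra.ι_add_mul_swap v w)

lemma move3 (a b c : M) : ιι a * ιι b * ιι c = ιι c * (ιι a * ιι b) := by
  rw [mul_assoc, anticomm b c, mul_neg, ← mul_assoc, anticomm a c, neg_mul, neg_neg, mul_assoc]

lemma block_comm (a b c d : M) :
    (ιι a * ιι b) * (ιι c * ιι d) = (ιι c * ιι d) * (ιι a * ιι b) := by
  calc (ιι a * ιι b) * (ιι c * ιι d) = (ιι a * ιι b * ιι c) * ιι d := by rw [← mul_assoc]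
  _ = (ιι c * (ιι a * ιι b)) * ιι d := by rw [move3]
  _ = ιι c * ((ιι a * ιι b) * ιι d) := by rw [mul_assoc]
  _ = ιι c * (ιι d * (ιι a * ιι b)) := by rw [move3 a b d]
  _ = (ιι c * ιι d) * (ιι a * ιι b) := by rw [mul_assoc]

lemma zero_ff (p q s : M) : (ιι p * ιι q) * (ιι p * ιι s) = 0 := by
  calc (ιι p * ιι q) * (ιι p * ιι s) = (ιι p * ιι q * ιι p) * ιι s := by rw [← mul_assoc]
  _ = (ιι p * (ιι p * ιι q)) * ιι s := by rw [move3]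
  _ = 0 := by rw [← mul_assoc, ExteriorAlgebra.ι_sq_zero, zero_mul, zero_mul]

lemma zero_sf (p q s : M) : (ιι p * ιι q) * (ιι q * ιι s) = 0 := by
  rw [← mul_assoc, mul_assoc (ιι p), ExteriorAlgebra.ι_sq_zero, mul_zero, zero_mul]

lemma zero_ss (p q r : M) : (ιι p * ιι q) * (ιι r * ιι q) = 0 := by
  rw [anticomm r q, mul_neg, ← mul_assoc, mul_assoc (ιι p), ExteriorAlgebra.ι_sq_zero,
    mul_zero, zero_mul, neg_zero]

lemma swap4 (p q r s : M) :
    (ιι p * ιι q) * (ιι r * ιι s) = -((ιι p * ιι s) * (ιι r * ιι q)) := by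
  have h : ιι q * (ιι r * ιι s) = -(ιι s * (ιι r * ιι q)) := by
    rw [anticomm r s, mul_neg, ← mul_assoc, anticomm q s, neg_mul, neg_neg, mul_assoc,
      anticomm q r, mul_neg]
  calc (ιι p * ιι q) * (ιι r * ιι s) = ιι p * (ιι q * (ιι r * ιι s)) := by rw [mul_assoc]
  _ = ιι p * -(ιι s * (ιι r * ιι q)) := by rw [h]
  _ = -((ιι p * ιι s) * (ιι r * ιι q)) := by rw [mul_neg, ← mul_assoc]

variable (K M) in
noncomputable def evenAlg : Subalgebra K (ExteriorAlgebra K M) :=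
  Algebra.adjoin K (Set.range fun vw : M × M => ιι vw.1 * ιι vw.2)

noncomputable instance : CommRing (evenAlg K M) :=
  { Subalgebra.toRing (evenAlg K M) with
    mul_comm := (Algebra.adjoinCommRingOfComm K (by
      rintro a ⟨⟨v, w⟩, rfl⟩ b ⟨⟨v', w'⟩, rfl⟩
      exact block_comm v w v' w')).mul_comm }

noncomputable instance : SMul (evenAlg K M) (evenAlg K M) := ⟨fun a b => a * b⟩

noncomputable instance : IsScalarTower K (evenAlg K M) (evenAlg K M) :=
  IsScalarTower.right (R := K) (A := evenAlg K M)

noncomputable instance : SMulCommClass K (evenAlg K M) (evenAlg K M) :=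
  Algebra.to_smulCommClass (R := K) (A := evenAlg K M)

noncomputable def Bc (v w : M) : evenAlg K M :=
  ⟨ιι v * ιι w, Algebra.subset_adjoin ⟨(v, w), rfl⟩⟩

@[simp] lemma val_Bc (v w : M) : ((Bc v w : evenAlg K M) : ExteriorAlgebra K M) = ιι v * ιι w :=
  rfl

noncomputable def valHom : evenAlg K M →+* ExteriorAlgebra K M where
  toFun := Subtype.val
  map_one' := rfl
  map_mul' _ _ := rfl
  map_zero' := rfl
  map_add' _ _ := rfl

@[simp] lemma valHom_apply (x : evenAlg K M) : valHom x = (x : ExteriorAlgebra K M) := rfl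

lemma valHom_smul (c : K) (x : evenAlg K M) :
    valHom (c • x) = c • (valHom x) := rfl

lemma Bc_zero_ff (p q s : M) : Bc (K := K) p q * Bc p s = 0 := Subtype.ext (zero_ff p q s)

lemma Bc_zero_sf (p q s : M) : Bc (K := K) p q * Bc q s = 0 := Subtype.ext (zero_sf p q s)

lemma Bc_zero_ss (p q r : M) : Bc (K := K) p q * Bc r q = 0 := Subtype.ext (zero_ss p q r)

lemma Bc_same (v : M) : Bc (K := K) v v = 0 := Subtype.ext (ExteriorAlgebra.ι_sq_zero v)

lemma Bc_swap (p q r s : M) : Bc (K := K) p q * Bc r s = -(Bc p s * Bc r q) :=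
  Subtype.ext (swap4 p q r s)


lemma prod_eq_zero_of_pair {R : Type*} [CommRing R] {m : ℕ} (G : Fin m → R)
    (i₀ i₁ : Fin m) (hne : i₀ ≠ i₁) (h : G i₀ * G i₁ = 0) : ∏ i, G i = 0 := by
  rw [← Finset.mul_prod_erase Finset.univ G (Finset.mem_univ i₀),
    ← Finset.mul_prod_erase _ G (Finset.mem_erase.mpr ⟨Ne.symm hne, Finset.mem_univ i₁⟩),
    ← mul_assoc, h, zero_mul]

lemma prod_swap_snd {m : ℕ} (a b : Fin m → M) {x y : Fin m} (hxy : x ≠ y) :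
    ∏ i, Bc (K := K) (a i) (b (Equiv.swap x y i)) = -∏ i, Bc (K := K) (a i) (b i) := by
  classical
  have hy : y ∈ Finset.univ.erase x := Finset.mem_erase.mpr ⟨Ne.symm hxy, Finset.mem_univ y⟩
  have hE : ∀ i ∈ (Finset.univ.erase x).erase y,
      Bc (K := K) (a i) (b (Equiv.swap x y i)) = Bc (K := K) (a i) (b i) := by
    intro i hi
    rcases Finset.mem_erase.mp hi with ⟨hiy, hi'⟩
    rcases Finset.mem_erase.mp hi' with ⟨hix, -⟩
    rw [Equiv.swap_apply_of_ne_of_ne hix hiy]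
  have hL : ∏ i, Bc (K := K) (a i) (b (Equiv.swap x y i))
      = Bc (K := K) (a x) (b y) * (Bc (K := K) (a y) (b x) *
        ∏ i ∈ (Finset.univ.erase x).erase y, Bc (K := K) (a i) (b i)) := by
    rw [← Finset.mul_prod_erase Finset.univ _ (Finset.mem_univ x),
      ← Finset.mul_prod_erase _ _ hy, Equiv.swap_apply_left, Equiv.swap_apply_right,
      Finset.prod_congr rfl hE]
  have hR : ∏ i, Bc (K := K) (a i) (b i)
      = Bc (K := K) (a x) (b x) * (Bc (K := K) (a y) (b y) *
        ∏ i ∈ (Finset.univ.erase x).erase y, Bc (K := K) (a i) (b i)) := by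
    rw [← Finset.mul_prod_erase Finset.univ _ (Finset.mem_univ x),
      ← Finset.mul_prod_erase _ _ hy]
  rw [hL, hR, ← mul_assoc, ← mul_assoc, Bc_swap, neg_mul]

lemma prod_perm {m : ℕ} (a : Fin m → M) (σ : Equiv.Perm (Fin m)) (b : Fin m → M) :
    ∏ i, Bc (K := K) (a i) (b (σ i))
      = (Equiv.Perm.sign σ : ℤ) • ∏ i, Bc (K := K) (a i) (b i) := by
  revert b
  refine Equiv.Perm.swap_induction_on σ (by simp) ?_
  intro f x y hxy ih b
  have h1 : ∏ i, Bc (K := K) (a i) (b ((Equiv.swap x y * f) i))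
      = ∏ i, Bc (K := K) (a i) ((b ∘ Equiv.swap x y) (f i)) := rfl
  rw [h1, ih (b ∘ Equiv.swap x y)]
  have h2 : ∏ i, Bc (K := K) (a i) ((b ∘ Equiv.swap x y) i)
      = -∏ i, Bc (K := K) (a i) (b i) := prod_swap_snd a b hxy
  rw [h2, Equiv.Perm.sign_mul, Equiv.Perm.sign_swap hxy]
  simp [smul_neg]

/-- Products of blocks vanish unless the index family comes from a pair of permutations. -/
lemma vanish {n : ℕ} (u : Fin n ⊕ Fin n → M) (f : Fin n → (Fin n ⊕ Fin n) × Fin n)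
    (hf : ∀ p q : Equiv.Perm (Fin n), ∃ i, f i ≠ (Sum.inl (p i), q i)) :
    ∏ i, Bc (K := K) (u (f i).1) (u (Sum.inr (f i).2)) = 0 := by
  classical
  by_cases hk : Function.Injective (fun i => (f i).2)
  · by_cases hx : ∃ i₀ c, (f i₀).1 = Sum.inr c
    · obtain ⟨i₀, c, hc⟩ := hx
      obtain ⟨i₁, hi₁⟩ := (Finite.injective_iff_surjective.mp hk) c
      by_cases h01 : i₁ = i₀
      · refine Finset.prod_eq_zero (Finset.mem_univ i₀) ?_
        subst h01
        have hi₁' : (f i₁).2 = c := hi₁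
        rw [hc, hi₁', Bc_same]
      · refine prod_eq_zero_of_pair _ i₁ i₀ h01 ?_
        have hi₁' : (f i₁).2 = c := hi₁
        rw [hi₁', hc]
        exact Bc_zero_sf _ _ _
    · push_neg at hx
      have hxl : ∀ i, ∃ j, (f i).1 = Sum.inl j := by
        intro i
        cases h : (f i).1 with
        | inl j => exact ⟨j, rfl⟩
        | inr c => exact absurd h (hx i c)
      choose p hp using hxl
      by_cases hpinj : Function.Injective p
      · exfalso
        have hpbij := Finite.injective_iff_bijective.mp hpinj
        have hkbij := Finite.injective_iff_bijective.mp hk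
        obtain ⟨i, hi⟩ := hf (Equiv.ofBijective p hpbij) (Equiv.ofBijective _ hkbij)
        exact hi (Prod.ext (hp i) rfl)
      · obtain ⟨i₀, i₁, h01, hne⟩ := Function.not_injective_iff.mp hpinj
        refine prod_eq_zero_of_pair _ i₀ i₁ hne ?_
        rw [hp i₀, hp i₁, h01]
        exact Bc_zero_ff _ _ _
  · obtain ⟨i₀, i₁, h01, hne⟩ := Function.not_injective_iff.mp hk
    refine prod_eq_zero_of_pair _ i₀ i₁ hne ?_
    have h01' : (f i₀).2 = (f i₁).2 := h01
    rw [h01']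
    exact Bc_zero_ss _ _ _

lemma prod_smul_gen {ι' : Type*} (s : Finset ι') (c : ι' → K) (g : ι' → evenAlg K M) :
    ∏ i ∈ s, (c i • g i) = (∏ i ∈ s, c i) • ∏ i ∈ s, g i := by
  classical
  induction s using Finset.cons_induction with
  | empty => simp
  | cons a s ha ih =>
    rw [Finset.prod_cons, Finset.prod_cons, Finset.prod_cons, ih, smul_mul_smul_comm]

end Stmt12Helper

open Stmt12Helper in
theorem stmt12 (n : ℕ) (X Y S : Matrix (Fin n) (Fin n) ℝ) :
    let dx : Fin n → ExteriorAlgebra ℂ (Fin n ⊕ Fin n → ℂ) :=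
      fun j => ExteriorAlgebra.ι ℂ (Pi.single (Sum.inl j) 1)
    let dy : Fin n → ExteriorAlgebra ℂ (Fin n ⊕ Fin n → ℂ) :=
      fun k => ExteriorAlgebra.ι ℂ (Pi.single (Sum.inr k) 1)
    let ω : ExteriorAlgebra ℂ (Fin n ⊕ Fin n → ℂ) :=
      (∑ j, ∑ k, (((2 * Real.pi * Y k j : ℝ)) : ℂ) • (dx j * dy k)) +
      (∑ j, ∑ k, (((2 * Real.pi * (Xᵀ * Y) k j : ℝ)) : ℂ) • (dy j * dy k))
    let F : ExteriorAlgebra ℂ (Fin n ⊕ Fin n → ℂ) :=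
      ∑ j, ∑ k, ((-((2 * Real.pi : ℝ) : ℂ)) * Complex.I * ((Sᵀ k j : ℝ) : ℂ)) •
        (dx j * dy k)
    (ω - F) ^ n =
      ((((2 * Real.pi : ℝ) : ℂ) * Complex.I) ^ n * (n.factorial : ℂ) *
        ((-Complex.I) • Y.map (fun r => (r : ℂ)) + (S.map (fun r => (r : ℂ)))ᵀ).det) •
        (List.ofFn (fun j : Fin n => dx j * dy j)).prod := by
  intro dx dy ω F
  classical
  let u : Fin n ⊕ Fin n → (Fin n ⊕ Fin n → ℂ) := fun s => Pi.single s 1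
  let Mc : Matrix (Fin n) (Fin n) ℂ :=
    (-Complex.I) • Y.map (fun r => (r : ℂ)) + (S.map (fun r => (r : ℂ)))ᵀ
  let cpi : ℂ := ((2 * Real.pi : ℝ) : ℂ) * Complex.I
  let coef : (Fin n ⊕ Fin n) × Fin n → ℂ := fun t =>
    Sum.elim (fun j => cpi * Mc t.2 j)
      (fun j => ((2 * Real.pi * (Xᵀ * Y) t.2 j : ℝ) : ℂ)) t.1
  let γ : ((Fin n ⊕ Fin n) × Fin n) → evenAlg ℂ (Fin n ⊕ Fin n → ℂ) := fun t =>
    coef t • Bc (u t.1) (u (Sum.inr t.2))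
  let Pn : evenAlg ℂ (Fin n ⊕ Fin n → ℂ) := ∏ i, Bc (u (Sum.inl i)) (u (Sum.inr i))
  -- coefficient identity
  have hco : ∀ j k : Fin n, coef (Sum.inl j, k)
      = (((2 * Real.pi * Y k j : ℝ)) : ℂ)
        - (-((2 * Real.pi : ℝ) : ℂ)) * Complex.I * ((Sᵀ k j : ℝ) : ℂ) := by
    intro j k
    have hMc : Mc k j = -Complex.I * (Y k j : ℂ) + (S j k : ℂ) := by
      simp [Mc, Matrix.add_apply, Matrix.smul_apply, Matrix.map_apply, Matrix.transpose_apply]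
    show cpi * Mc k j = _
    rw [hMc]
    show ((2 * Real.pi : ℝ) : ℂ) * Complex.I * (-Complex.I * (Y k j : ℂ) + (S j k : ℂ)) = _
    have hI : Complex.I * Complex.I = -1 := Complex.I_mul_I
    simp only [Matrix.transpose_apply]
    push_cast
    linear_combination (-2 * (Real.pi : ℂ) * (Y k j : ℂ)) * hI
  -- the sum of γ's is ω - F
  have hsum : valHom (∑ t, γ t) = ω - F := by
    rw [map_sum]
    have hval : ∀ t, valHom (γ t)
        = coef t • (ExteriorAlgebra.ι ℂ (u t.1) * ExteriorAlgebra.ι ℂ (u (Sum.inr t.2))) :=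
      fun t => rfl
    simp only [hval]
    rw [Fintype.sum_prod_type, Fintype.sum_sum_type]
    have hω : ω = (∑ j, ∑ k, (((2 * Real.pi * Y k j : ℝ)) : ℂ) • (dx j * dy k)) +
      (∑ j, ∑ k, (((2 * Real.pi * (Xᵀ * Y) k j : ℝ)) : ℂ) • (dy j * dy k)) := rfl
    have hF : F = ∑ j, ∑ k, ((-((2 * Real.pi : ℝ) : ℂ)) * Complex.I * ((Sᵀ k j : ℝ) : ℂ)) •
        (dx j * dy k) := rfl
    have h1 : ω - F = ((∑ j, ∑ k, (((2 * Real.pi * Y k j : ℝ)) : ℂ) • (dx j * dy k)) - F) +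
        (∑ j, ∑ k, (((2 * Real.pi * (Xᵀ * Y) k j : ℝ)) : ℂ) • (dy j * dy k)) := by
      rw [hω, add_sub_right_comm]
    have h2 : (∑ j, ∑ k, (((2 * Real.pi * Y k j : ℝ)) : ℂ) • (dx j * dy k)) - F
        = ∑ j, ∑ k, coef (Sum.inl j, k) • (dx j * dy k) := by
      rw [hF, ← Finset.sum_sub_distrib]
      refine Finset.sum_congr rfl fun j _ => ?_
      rw [← Finset.sum_sub_distrib]
      refine Finset.sum_congr rfl fun k _ => ?_
      rw [← sub_smul, hco j k]
    rw [h1, h2]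
    rfl
  -- the power computation
  have hpow : (∑ t, γ t) ^ n = (cpi ^ n * (n.factorial : ℂ) * Mc.det) • Pn := by
    rw [Fintype.sum_pow]
    have hterm : ∀ f : Fin n → ((Fin n ⊕ Fin n) × Fin n),
        ∏ i, γ (f i) = (∏ i, coef (f i)) •
          ∏ i, Bc (K := ℂ) (u (f i).1) (u (Sum.inr (f i).2)) :=
      fun f => prod_smul_gen Finset.univ (fun i => coef (f i))
        (fun i => Bc (u (f i).1) (u (Sum.inr (f i).2)))
    simp only [hterm]
    set e : Equiv.Perm (Fin n) × Equiv.Perm (Fin n) → (Fin n → ((Fin n ⊕ Fin n) × Fin n)) :=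
      fun pq i => (Sum.inl (pq.1 i), pq.2 i) with he_def
    have hinj : ∀ x ∈ (Finset.univ : Finset (Equiv.Perm (Fin n) × Equiv.Perm (Fin n))),
        ∀ y ∈ Finset.univ, e x = e y → x = y := by
      rintro ⟨p, q⟩ - ⟨p', q'⟩ - h
      have h' : ∀ i, (Sum.inl (p i) : Fin n ⊕ Fin n) = Sum.inl (p' i) ∧ q i = q' i := by
        intro i
        have h2 := congrFun h i
        exact ⟨congrArg Prod.fst h2, congrArg Prod.snd h2⟩
      exact Prod.ext (Equiv.ext fun i => Sum.inl.inj (h' i).1) (Equiv.ext fun i => (h' i).2)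
    have hz : ∀ f ∈ (Finset.univ : Finset (Fin n → ((Fin n ⊕ Fin n) × Fin n))),
        f ∉ Finset.univ.image e →
        (∏ i, coef (f i)) • ∏ i, Bc (K := ℂ) (u (f i).1) (u (Sum.inr (f i).2)) = 0 := by
      intro f _ hf
      have hgood : ∀ p q : Equiv.Perm (Fin n), ∃ i, f i ≠ (Sum.inl (p i), q i) := by
        intro p q
        by_contra hc
        push_neg at hc
        exact hf (Finset.mem_image.mpr ⟨(p, q), Finset.mem_univ _,
          (funext fun i => (hc i).symm)⟩)
      rw [vanish u f hgood, smul_zero]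
    rw [← Finset.sum_subset (Finset.subset_univ _) hz, Finset.sum_image hinj]
    have hterm2 : ∀ pq : Equiv.Perm (Fin n) × Equiv.Perm (Fin n),
        (∏ i, coef (e pq i)) • ∏ i, Bc (K := ℂ) (u (e pq i).1) (u (Sum.inr (e pq i).2))
          = (cpi ^ n * ((Equiv.Perm.sign (pq.2 * pq.1⁻¹) : ℤ) : ℂ) *
              ∏ j, Mc ((pq.2 * pq.1⁻¹) j) j) • Pn := by
      rintro ⟨p, q⟩
      set σ : Equiv.Perm (Fin n) := q * p⁻¹ with hσ
      have hσp : ∀ i, σ (p i) = q i := by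
        intro i
        simp [hσ, Equiv.Perm.mul_apply]
      have hc1 : ∏ i, coef (e (p, q) i) = cpi ^ n * ∏ j, Mc (σ j) j := by
        have h0 : ∀ i, coef (e (p, q) i) = cpi * Mc (q i) (p i) := fun i => rfl
        simp only [h0]
        rw [Finset.prod_mul_distrib, Finset.prod_const, Finset.card_univ, Fintype.card_fin]
        congr 1
        calc ∏ i, Mc (q i) (p i) = ∏ i, Mc (σ (p i)) (p i) := by simp only [hσp]
        _ = ∏ j, Mc (σ j) j := Equiv.prod_comp p (fun j => Mc (σ j) j)
      have hb : ∏ i, Bc (K := ℂ) (u (e (p, q) i).1) (u (Sum.inr (e (p, q) i).2))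
          = ((Equiv.Perm.sign σ : ℤ) : ℂ) • Pn := by
        have h1 : ∏ i, Bc (K := ℂ) (u (Sum.inl (p i))) (u (Sum.inr (q i)))
            = ∏ j, Bc (K := ℂ) (u (Sum.inl j)) (u (Sum.inr (σ j))) := by
          calc ∏ i, Bc (K := ℂ) (u (Sum.inl (p i))) (u (Sum.inr (q i)))
              = ∏ i, Bc (K := ℂ) (u (Sum.inl (p i))) (u (Sum.inr (σ (p i)))) := by
                simp only [hσp]
          _ = _ := Equiv.prod_comp p (fun j => Bc (u (Sum.inl j)) (u (Sum.inr (σ j))))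
        have h2 : ∏ i, Bc (K := ℂ) (u (e (p, q) i).1) (u (Sum.inr (e (p, q) i).2))
            = ∏ i, Bc (K := ℂ) (u (Sum.inl (p i))) (u (Sum.inr (q i))) := rfl
        rw [h2, h1, prod_perm (fun j => u (Sum.inl j)) σ (fun j => u (Sum.inr j)),
          ← Int.cast_smul_eq_zsmul ℂ]
      rw [hc1, hb, smul_smul]
      exact congrArg (· • Pn) (by ring)
    simp only [hterm2]
    rw [Fintype.sum_prod_type]
    have hq : ∀ p : Equiv.Perm (Fin n),
        (∑ q : Equiv.Perm (Fin n),
          (cpi ^ n * ((Equiv.Perm.sign (q * p⁻¹) : ℤ) : ℂ) * ∏ j, Mc ((q * p⁻¹) j) j) • Pn)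
          = (cpi ^ n * Mc.det) • Pn := by
      intro p
      rw [Fintype.sum_equiv (Equiv.mulRight p⁻¹)
        (fun q => (cpi ^ n * ((Equiv.Perm.sign (q * p⁻¹) : ℤ) : ℂ) * ∏ j, Mc ((q * p⁻¹) j) j) • Pn)
        (fun σ => (cpi ^ n * ((Equiv.Perm.sign σ : ℤ) : ℂ) * ∏ j, Mc (σ j) j) • Pn)
        (fun q => rfl)]
      simp only [mul_assoc]
      rw [← Finset.sum_smul, ← Finset.mul_sum, ← Matrix.det_apply']
    simp only [hq]
    rw [Finset.sum_const, Finset.card_univ, Fintype.card_perm, Fintype.card_fin,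
      ← Nat.cast_smul_eq_nsmul ℂ, smul_smul]
    exact congrArg (· • Pn) (by ring)
  have hgoal : (ω - F) ^ n = (cpi ^ n * (n.factorial : ℂ) * Mc.det) • valHom Pn := by
    rw [← hsum, ← map_pow, hpow, valHom_smul]
  rw [hgoal]
  have hPn : valHom Pn = (List.ofFn fun j : Fin n => dx j * dy j).prod := by
    have h1 : Pn = (List.ofFn fun i : Fin n =>
        Bc (K := ℂ) (u (Sum.inl i)) (u (Sum.inr i))).prod := List.prod_ofFn.symm
    rw [h1, map_list_prod, List.map_ofFn]
    rfl
  rw [hPn]
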